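/- Let f : ℝ² → [0,∞) be integrable, radially symmetric and radially non-increasing, and not almost everywhere constant on its support in a way that E[f(aZ)] is non-constant. Then the map a ↦ ∫_{ℝ²} f(y) g_a(y) dy is non-increasing in a > 0; in particular if f is strictly radially decreasing on a set of positive measure then the map is strictly decreasing. -/

import Mathlib

open MeasureTheory Real

noncomputable def heatKernel (t : ℝ) (x : EuclideanSpace ℝ (Fin 2)) : ℝ :=
  (1 / (2 * π * t)) * Real.exp (-‖x‖ ^ 2 / (2 * t))

namespace GaussAux

noncomputable def e0 : EuclideanSpace ℝ (Fin 2) := EuclideanSpace.single (0 : Fin 2) (1 : ℝ)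

lemma norm_smul_e0 (c : ℝ) : ‖c • e0‖ = |c| := by
  rw [norm_smul, e0, EuclideanSpace.norm_single]
  simp

/-- radial profile, extended constantly to the left of 0 -/
noncomputable def radF (f : EuclideanSpace ℝ (Fin 2) → ℝ) (r : ℝ) : ℝ :=
  f ((max r 0) • e0)

lemma norm_radF_pt (r : ℝ) : ‖(max r 0) • e0‖ = max r 0 := by
  rw [norm_smul_e0, abs_of_nonneg (le_max_right r 0)]

variable {f : EuclideanSpace ℝ (Fin 2) → ℝ}

lemma radF_eq (hrad : ∀ x y : EuclideanSpace ℝ (Fin 2), ‖x‖ ≤ ‖y‖ → f y ≤ f x)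
    (y : EuclideanSpace ℝ (Fin 2)) : f y = radF f ‖y‖ := by
  have h1 : ‖(max ‖y‖ 0) • e0‖ = ‖y‖ := by
    rw [norm_radF_pt, max_eq_left (norm_nonneg y)]
  exact le_antisymm (hrad _ _ h1.le) (hrad _ _ h1.ge)

lemma radF_anti (hrad : ∀ x y : EuclideanSpace ℝ (Fin 2), ‖x‖ ≤ ‖y‖ → f y ≤ f x) :
    Antitone (radF f) := by
  intro r s hrs
  exact hrad _ _ (by rw [norm_radF_pt, norm_radF_pt]; exact max_le_max hrs le_rfl)

lemma radF_nonneg (h0 : ∀ x, 0 ≤ f x) (r : ℝ) : 0 ≤ radF f r := h0 _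

lemma radF_le_f0 (hrad : ∀ x y : EuclideanSpace ℝ (Fin 2), ‖x‖ ≤ ‖y‖ → f y ≤ f x)
    (r : ℝ) : radF f r ≤ f 0 := by
  have := hrad 0 ((max r 0) • e0) (by simp)
  simpa [radF] using this

lemma radF_strict (hstrict : ∀ x y : EuclideanSpace ℝ (Fin 2), ‖x‖ < ‖y‖ → f y < f x)
    {r s : ℝ} (hr : 0 ≤ r) (hrs : r < s) : radF f s < radF f r := by
  refine hstrict _ _ ?_
  rw [norm_radF_pt, norm_radF_pt, max_eq_left hr, max_eq_left (hr.trans hrs.le)]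
  exact hrs

/-- The transformed integrand. -/
noncomputable def trf (f : EuclideanSpace ℝ (Fin 2) → ℝ) (a u : ℝ) : ℝ :=
  radF f (Real.sqrt (2 * a * u)) * Real.exp (-u)

lemma trf_integrable (hrad : ∀ x y : EuclideanSpace ℝ (Fin 2), ‖x‖ ≤ ‖y‖ → f y ≤ f x)
    (h0 : ∀ x, 0 ≤ f x) (a : ℝ) :
    IntegrableOn (trf f a) (Set.Ioi (0 : ℝ)) := by
  have hmeas : Measurable (trf f a) := by
    have h1 : Measurable (radF f) := (radF_anti hrad).measurable
    exact (h1.comp ((measurable_const.mul measurable_id).sqrt)).mul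
      (measurable_id.neg.exp)
  have hdom : IntegrableOn (fun u : ℝ => f 0 * Real.exp (-1 * u)) (Set.Ioi 0) :=
    (exp_neg_integrableOn_Ioi 0 one_pos).const_mul _
  refine Integrable.mono' hdom hmeas.aestronglyMeasurable ?_
  filter_upwards with u
  simp only [trf, Real.norm_eq_abs]
  rw [abs_of_nonneg (mul_nonneg (radF_nonneg h0 _) (Real.exp_nonneg _))]
  have he : Real.exp (-1 * u) = Real.exp (-u) := by ring_nf
  rw [he]
  exact mul_le_mul_of_nonneg_right (radF_le_f0 hrad _) (Real.exp_nonneg _)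

end GaussAux

open GaussAux

lemma gauss_key (f : EuclideanSpace ℝ (Fin 2) → ℝ)
    (hrad : ∀ x y : EuclideanSpace ℝ (Fin 2), ‖x‖ ≤ ‖y‖ → f y ≤ f x)
    {a : ℝ} (ha : 0 < a) :
    ∫ y : EuclideanSpace ℝ (Fin 2), f y * heatKernel a y
      = ∫ u in Set.Ioi (0 : ℝ), trf f a u := by
  have h2a : (0 : ℝ) < 2 * a := by linarith
  have hπ : Real.pi ≠ 0 := Real.pi_ne_zero
  have ha' : a ≠ 0 := ha.ne'
  set K : ℝ → ℝ := fun r => radF f r * ((1 / (2 * π * a)) * Real.exp (-r ^ 2 / (2 * a))) with hK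
  have step1 : ∫ y : EuclideanSpace ℝ (Fin 2), f y * heatKernel a y
      = ∫ y : EuclideanSpace ℝ (Fin 2), K ‖y‖ := by
    congr 1; ext y
    rw [hK]; simp only [heatKernel]
    rw [← radF_eq hrad y]
  rw [step1]
  have hdim : Module.finrank ℝ (EuclideanSpace ℝ (Fin 2)) = 2 := finrank_euclideanSpace_fin
  have hball : (volume (Metric.ball (0 : EuclideanSpace ℝ (Fin 2)) 1)).toReal = π := by
    rw [EuclideanSpace.volume_ball]
    simp only [Fintype.card_fin]
    rw [show ((2 : ℕ) : ℝ) / 2 + 1 = 2 by norm_num, Real.Gamma_two, div_one]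
    rw [Real.sq_sqrt Real.pi_pos.le]
    simp [ENNReal.toReal_ofReal Real.pi_pos.le]
  have step2 := MeasureTheory.integral_fun_norm_addHaar
    (volume : Measure (EuclideanSpace ℝ (Fin 2))) K
  rw [hdim, measureReal_def, hball] at step2
  rw [step2]
  simp only [show (2 - 1 : ℕ) = 1 from rfl, pow_one, nsmul_eq_mul, smul_eq_mul, Nat.cast_ofNat]
  -- change of variables
  set φ : ℝ → ℝ := fun u => Real.sqrt (2 * a * u) with hφ
  have hφ_img : φ '' Set.Ioi 0 = Set.Ioi (0 : ℝ) := by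
    ext r
    constructor
    · rintro ⟨u, hu, rfl⟩
      exact Real.sqrt_pos.2 (mul_pos h2a hu)
    · intro hr
      refine ⟨r ^ 2 / (2 * a), div_pos (pow_pos hr 2) h2a, ?_⟩
      show Real.sqrt (2 * a * (r ^ 2 / (2 * a))) = r
      rw [show 2 * a * (r ^ 2 / (2 * a)) = r ^ 2 by field_simp]
      exact Real.sqrt_sq hr.le
  have hφ_inj : Set.InjOn φ (Set.Ioi 0) := by
    intro u hu v hv h
    have hu' : (0 : ℝ) ≤ 2 * a * u := (mul_pos h2a hu).le
    have hv' : (0 : ℝ) ≤ 2 * a * v := (mul_pos h2a hv).le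
    have h2 : 2 * a * u = 2 * a * v := by
      have := congrArg (fun t => t ^ 2) h
      simpa [hφ, Real.sq_sqrt hu', Real.sq_sqrt hv'] using this
    exact mul_left_cancel₀ h2a.ne' h2
  have hφ_deriv : ∀ u ∈ Set.Ioi (0 : ℝ),
      HasDerivWithinAt φ (Real.sqrt (2 * a) / (2 * Real.sqrt u)) (Set.Ioi 0) u := by
    intro u hu
    have h1 : HasDerivAt Real.sqrt (1 / (2 * Real.sqrt u)) u :=
      Real.hasDerivAt_sqrt (ne_of_gt hu)
    have h2 : HasDerivAt (fun u => Real.sqrt (2 * a) * Real.sqrt u)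
        (Real.sqrt (2 * a) * (1 / (2 * Real.sqrt u))) u := h1.const_mul _
    have heq : (fun u => Real.sqrt (2 * a) * Real.sqrt u) = φ := by
      funext v; rw [hφ]
      show Real.sqrt (2 * a) * Real.sqrt v = Real.sqrt (2 * a * v)
      exact (Real.sqrt_mul h2a.le v).symm
    rw [heq] at h2
    have h3 : Real.sqrt (2 * a) * (1 / (2 * Real.sqrt u))
        = Real.sqrt (2 * a) / (2 * Real.sqrt u) := by ring
    rw [h3] at h2
    exact h2.hasDerivWithinAt
  have hptwise : ∀ u ∈ Set.Ioi (0 : ℝ),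
      |Real.sqrt (2 * a) / (2 * Real.sqrt u)| • ((fun r => r * K r) (φ u))
        = (1 / (2 * π)) * trf f a u := by
    intro u hu
    have hu0 : (0 : ℝ) < u := hu
    have hsu : (0 : ℝ) < Real.sqrt u := Real.sqrt_pos.2 hu0
    have habs : |Real.sqrt (2 * a) / (2 * Real.sqrt u)| = Real.sqrt (2 * a) / (2 * Real.sqrt u) :=
      abs_of_nonneg (div_nonneg (Real.sqrt_nonneg _) (by linarith))
    simp only [habs, smul_eq_mul]
    have hφu : φ u = Real.sqrt (2 * a) * Real.sqrt u := by
      rw [hφ]; show Real.sqrt (2 * a * u) = _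
      rw [Real.sqrt_mul h2a.le]
    have hprod : Real.sqrt (2 * a) / (2 * Real.sqrt u) * φ u = a := by
      rw [hφu, div_mul_eq_mul_div, div_eq_iff (mul_pos two_pos hsu).ne']
      linear_combination Real.sqrt u * Real.mul_self_sqrt h2a.le
    rw [← mul_assoc, hprod, hK]
    have hsq : (φ u) ^ 2 = 2 * a * u := Real.sq_sqrt (mul_pos h2a hu0).le
    simp only [hsq]
    have hexp : -(2 * a * u) / (2 * a) = -u := by field_simp
    rw [hexp]
    have hfold : Real.sqrt (2 * a * u) = φ u := rfl
    simp only [trf, hfold]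
    generalize radF f (φ u) = R
    field_simp
  have h3 : ∫ y in Set.Ioi (0:ℝ), y * K y = (1 / (2 * π)) * ∫ u in Set.Ioi (0:ℝ), trf f a u := by
    have hchg := MeasureTheory.integral_image_eq_integral_abs_deriv_smul measurableSet_Ioi
      hφ_deriv hφ_inj (fun r => r * K r)
    rw [hφ_img] at hchg
    rw [hchg, MeasureTheory.setIntegral_congr_fun measurableSet_Ioi hptwise,
      MeasureTheory.integral_const_mul]
  rw [h3]
  field_simp

theorem gaussian_average_antitone
    (f : EuclideanSpace ℝ (Fin 2) → ℝ)
    (hint : Integrable f) (h0 : ∀ x, 0 ≤ f x)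
    (hrad : ∀ x y : EuclideanSpace ℝ (Fin 2), ‖x‖ ≤ ‖y‖ → f y ≤ f x) :
    AntitoneOn (fun a => ∫ y : EuclideanSpace ℝ (Fin 2), f y * heatKernel a y)
        (Set.Ioi (0 : ℝ)) ∧
      ((∀ x y : EuclideanSpace ℝ (Fin 2), ‖x‖ < ‖y‖ → f y < f x) →
        StrictAntiOn (fun a => ∫ y : EuclideanSpace ℝ (Fin 2), f y * heatKernel a y)
          (Set.Ioi (0 : ℝ))) := by
  constructor
  · intro a ha b hb hab
    simp only
    rw [gauss_key f hrad ha, gauss_key f hrad hb]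
    refine MeasureTheory.setIntegral_mono_on (trf_integrable hrad h0 b)
      (trf_integrable hrad h0 a) measurableSet_Ioi ?_
    intro u hu
    have hu0 : (0:ℝ) < u := hu
    refine mul_le_mul_of_nonneg_right ?_ (Real.exp_nonneg _)
    exact radF_anti hrad (Real.sqrt_le_sqrt (by nlinarith))
  · intro hstrict a ha b hb hab
    simp only
    rw [gauss_key f hrad ha, gauss_key f hrad hb]
    have hb0 : (0:ℝ) < b := hb
    have ha0 : (0:ℝ) < a := ha
    have key : (0 : ℝ) < ∫ u in Set.Ioi (0:ℝ), (trf f a u - trf f b u) := by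
      rw [MeasureTheory.integral_pos_iff_support_of_nonneg_ae]
      · have hsub : Set.Ioi (0:ℝ) ⊆ Function.support (fun u => trf f a u - trf f b u) := by
          intro u hu
          have hu0 : (0:ℝ) < u := hu
          have hlt : Real.sqrt (2 * a * u) < Real.sqrt (2 * b * u) :=
            Real.sqrt_lt_sqrt (by nlinarith) (by nlinarith)
          have h1 : radF f (Real.sqrt (2 * b * u)) < radF f (Real.sqrt (2 * a * u)) :=
            radF_strict hstrict (Real.sqrt_nonneg _) hlt
          have h2 : trf f b u < trf f a u :=
            mul_lt_mul_of_pos_right h1 (Real.exp_pos _)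
          exact (sub_pos.2 h2).ne'
        calc (0 : ENNReal) < volume.restrict (Set.Ioi (0:ℝ)) (Set.Ioi 0) := by
              rw [Measure.restrict_apply measurableSet_Ioi, Set.inter_self]
              simp [Real.volume_Ioi]
          _ ≤ _ := measure_mono hsub
      · rw [Filter.EventuallyLE, ae_restrict_iff' measurableSet_Ioi]
        filter_upwards with u hu
        have hu0 : (0:ℝ) < u := hu
        have hle : Real.sqrt (2 * a * u) ≤ Real.sqrt (2 * b * u) :=
          Real.sqrt_le_sqrt (by nlinarith)
        have h1 := radF_anti hrad hle
        simp only [Pi.zero_apply]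
        have h2 : trf f b u ≤ trf f a u :=
          mul_le_mul_of_nonneg_right h1 (Real.exp_nonneg _)
        linarith
      · exact (trf_integrable hrad h0 a).sub (trf_integrable hrad h0 b)
    rw [MeasureTheory.integral_sub (trf_integrable hrad h0 a) (trf_integrable hrad h0 b)] at key
    linarith
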